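/- In the weighted geometric random k-SAT model on 𝕋^d with a 𝔭-norm and temperature T < 1, let c be a clause at any fixed position and let the n weighted variables have independent uniformly random positions. If x̄ ∈ Ω(W^{1/T}), then the expected sum of connection weights smaller than x̄ is O(x̄); i.e., E[ Σ_{v ∈ V} X(c,v) · 1{X(c,v) < x̄} ] ∈ O(x̄). -/

import Mathlib

open Filter Finset MeasureTheory
open scoped ENNReal

instance : Fact ((0 : ℝ) < 1) := ⟨one_pos⟩

/-- The `d`-dimensional unit torus `𝕋^d = ℝ^d / ℤ^d`. -/
abbrev Torus (d : ℕ) := Fin d → AddCircle (1 : ℝ)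

/-- The `𝔭`-norm distance on the torus, for `𝔭 ∈ ℕ⁺ ∪ {∞}` (`𝔭 = ⊤` is the sup-norm);
`‖x i - y i‖` is the circular difference of the `i`-th coordinates. -/
noncomputable def torusDist (d : ℕ) (p : ℕ∞) (x y : Torus d) : ℝ :=
  if p = ⊤ then ⨆ i : Fin d, ‖x i - y i‖
  else (∑ i : Fin d, ‖x i - y i‖ ^ (p.toNat : ℝ)) ^ ((p.toNat : ℝ))⁻¹

/-- The connection weight `X(c, v) = (w_v / dist(c, v)^d)^{1/T}` between a clause at
position `c` and a variable of weight `w` at position `v`. -/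
noncomputable def connW (d : ℕ) (p : ℕ∞) (T : ℝ) (w : ℝ) (c v : Torus d) : ℝ≥0∞ :=
  (ENNReal.ofReal w / ENNReal.ofReal (torusDist d p c v) ^ (d : ℝ)) ^ (1 / T)

/-- Probability that a clause at position `c` draws the ordered tuple `v` of `k`
distinct variables, drawn sequentially without repetition with probabilities
proportional to the connection weights. -/
noncomputable def drawMass (d : ℕ) (p : ℕ∞) (T : ℝ) {n : ℕ} (k : ℕ) (w : Fin n → ℝ)
    (c : Torus d) (vp : Fin n → Torus d) (v : Fin k → Fin n) : ℝ≥0∞ :=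
  if Function.Injective v then
    ∏ j : Fin k,
      connW d p T (w (v j)) c (vp (v j)) /
        ((∑ u : Fin n, connW d p T (w u) c (vp u)) -
          ∑ l ∈ Finset.univ.filter (fun l : Fin k => l < j),
            connW d p T (w (v l)) c (vp (v l)))
  else 0

/-- The discrete measure with mass function `f`. -/
noncomputable def discMeasure {α : Type*} [MeasurableSpace α] (f : α → ℝ≥0∞) :
    Measure α :=
  Measure.sum fun a : α => f a • Measure.dirac a

/-- The tuple `v` of variables drawn by a clause at position `c` is *nice*: for each
`j`, the `j`-th drawn variable has the `j`-th highest connection weight, i.e. its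
connection weight is at least that of every variable not drawn before or at step `j`. -/
def Nice (d : ℕ) (p : ℕ∞) (T : ℝ) {n k : ℕ} (w : Fin n → ℝ)
    (c : Torus d) (vp : Fin n → Torus d) (v : Fin k → Fin n) : Prop :=
  ∀ j : Fin k, ∀ u : Fin n, (∀ l : Fin k, l ≤ j → v l ≠ u) →
    connW d p T (w u) c (vp u) ≤ connW d p T (w (v j)) c (vp (v j))

instance probOnCircle : IsProbabilityMeasure (volume : Measure (AddCircle (1:ℝ))) :=
  ⟨by rw [AddCircle.measure_univ]; simp⟩

lemma torusDist_nonneg (d : ℕ) (p : ℕ∞) (x y : Torus d) : 0 ≤ torusDist d p x y := by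
  unfold torusDist
  split
  · exact Real.iSup_nonneg (fun i => norm_nonneg _)
  · exact Real.rpow_nonneg
      (Finset.sum_nonneg fun i _ => Real.rpow_nonneg (norm_nonneg _) _) _

lemma norm_le_torusDist (d : ℕ) (p : ℕ∞) (x y : Torus d) (i : Fin d) :
    ‖x i - y i‖ ≤ torusDist d p x y := by
  unfold torusDist
  split
  · exact le_ciSup (f := fun j => ‖x j - y j‖) (Set.Finite.bddAbove (Set.finite_range _)) i
  · rcases Nat.eq_zero_or_pos p.toNat with h0 | hpos
    · rw [h0]
      simp only [Nat.cast_zero, Real.rpow_zero, inv_zero]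
      calc ‖x i - y i‖ ≤ |(1:ℝ)| / 2 := AddCircle.norm_le_half_period _ one_ne_zero
        _ ≤ 1 := by norm_num
    · have hne : (p.toNat : ℝ) ≠ 0 := by positivity
      calc ‖x i - y i‖ = (‖x i - y i‖ ^ (p.toNat : ℝ)) ^ ((p.toNat : ℝ))⁻¹ :=
            (Real.rpow_rpow_inv (norm_nonneg _) hne).symm
        _ ≤ (∑ j : Fin d, ‖x j - y j‖ ^ (p.toNat : ℝ)) ^ ((p.toNat : ℝ))⁻¹ :=
            Real.rpow_le_rpow (Real.rpow_nonneg (norm_nonneg _) _)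
              (Finset.single_le_sum (f := fun j => ‖x j - y j‖ ^ (p.toNat : ℝ)) (fun j _ => Real.rpow_nonneg (norm_nonneg _) _)
                (Finset.mem_univ i)) (by positivity)

lemma measurable_torusDist (d : ℕ) (p : ℕ∞) (c : Torus d) :
    Measurable (torusDist d p c) := by
  unfold torusDist
  split
  · exact Measurable.iSup fun i =>
      (continuous_const.sub (continuous_apply i)).norm.measurable
  · exact (Finset.measurable_sum _ fun i _ =>
      ((continuous_const.sub (continuous_apply i)).norm.measurable).pow_const _).pow_const _

lemma measurable_connW (d : ℕ) (p : ℕ∞) (T w : ℝ) (c : Torus d) :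
    Measurable (connW d p T w c) := by
  unfold connW
  exact (Measurable.div measurable_const
    ((ENNReal.measurable_ofReal.comp (measurable_torusDist d p c)).pow
      measurable_const)).pow measurable_const

lemma lintegral_eval (d n : ℕ) (v : Fin n) (g : Torus d → ℝ≥0∞) (hg : Measurable g) :
    ∫⁻ vp : Fin n → Torus d, g (vp v) = ∫⁻ x, g x := by
  have h : (volume : Measure (Fin n → Torus d)).map (Function.eval v) = volume := by
    ext s hs
    rw [Measure.map_apply (measurable_pi_apply v) hs, Set.eval_preimage]
    rw [show (volume : Measure (Fin n → Torus d)) = Measure.pi (fun _ => volume) from rfl,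
      Measure.pi_pi]
    rw [Fintype.prod_eq_single v (fun u hu => by simp [Function.update_of_ne hu])]
    simp
  rw [← h, lintegral_map hg (measurable_pi_apply v)]

lemma meas_connW_ge_le (d : ℕ) (hd : 0 < d) (p : ℕ∞) (T : ℝ) (hT0 : 0 < T)
    (w : ℝ) (c : Torus d) (a : ℝ≥0∞) (ha0 : a ≠ 0) (hat : a ≠ ⊤) :
    volume {x : Torus d | a ≤ connW d p T w c x} ≤
      2 ^ (d : ℝ) * ENNReal.ofReal w * a ^ (-T) := by
  set W := ENNReal.ofReal w with hW
  have hdR : (d : ℝ) ≠ 0 := by positivity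
  have ht0 : a ^ T ≠ 0 := (ENNReal.rpow_pos (ha0.bot_lt) hat).ne'
  have htt : a ^ T ≠ ⊤ := ENNReal.rpow_ne_top_of_nonneg hT0.le hat
  have hWt : W ≠ ⊤ := ENNReal.ofReal_ne_top
  set ρ' : ℝ≥0∞ := (W / a ^ T) ^ ((d : ℝ))⁻¹ with hρ'
  have hρ't : ρ' ≠ ⊤ :=
    ENNReal.rpow_ne_top_of_nonneg (by positivity) (by simp [ENNReal.div_eq_top, hWt, ht0])
  set ρ : ℝ := ρ'.toReal with hρ
  have hsub : {x : Torus d | a ≤ connW d p T w c x} ⊆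
      Set.pi Set.univ (fun i => Metric.closedBall (c i) ρ) := by
    intro x hx
    set D := ENNReal.ofReal (torusDist d p c x) with hD
    have h1 : a ^ T ≤ W / D ^ (d : ℝ) := by
      have h := ENNReal.rpow_le_rpow hx hT0.le
      rwa [connW, ← ENNReal.rpow_mul, one_div, inv_mul_cancel₀ hT0.ne',
        ENNReal.rpow_one] at h
    have hDd_top : D ^ (d : ℝ) ≠ ⊤ :=
      ENNReal.rpow_ne_top_of_nonneg (by positivity) ENNReal.ofReal_ne_top
    have h2 : D ^ (d : ℝ) ≤ W / a ^ T := by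
      rcases eq_or_ne (D ^ (d : ℝ)) 0 with h | h
      · simp [h]
      · have h' := (ENNReal.le_div_iff_mul_le (Or.inl h) (Or.inl hDd_top)).mp h1
        exact (ENNReal.le_div_iff_mul_le (Or.inl ht0) (Or.inl htt)).mpr
          (by rwa [mul_comm] at h')
    have h3 : D ≤ ρ' := by
      have h := ENNReal.rpow_le_rpow h2 (inv_nonneg.mpr (Nat.cast_nonneg d))
      rwa [← ENNReal.rpow_mul, mul_inv_cancel₀ hdR, ENNReal.rpow_one] at h
    have h4 : torusDist d p c x ≤ ρ := by
      have h := ENNReal.toReal_mono hρ't h3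
      rwa [hD, ENNReal.toReal_ofReal (torusDist_nonneg d p c x)] at h
    intro i _
    rw [Metric.mem_closedBall, dist_eq_norm]
    calc ‖x i - c i‖ = ‖c i - x i‖ := norm_sub_rev _ _
      _ ≤ torusDist d p c x := norm_le_torusDist d p c x i
      _ ≤ ρ := h4
  calc volume {x : Torus d | a ≤ connW d p T w c x}
      ≤ volume (Set.pi Set.univ (fun i => Metric.closedBall (c i) ρ)) :=
        measure_mono hsub
    _ = ∏ i : Fin d, volume (Metric.closedBall (c i) ρ) := volume_pi_pi _
    _ ≤ ∏ _i : Fin d, ENNReal.ofReal (2 * ρ) :=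
        Finset.prod_le_prod' fun i _ => by
          rw [AddCircle.volume_closedBall]
          exact ENNReal.ofReal_le_ofReal (min_le_right _ _)
    _ = ENNReal.ofReal (2 * ρ) ^ (d : ℝ) := by
        rw [Finset.prod_const, Finset.card_univ, Fintype.card_fin, ENNReal.rpow_natCast]
    _ = 2 ^ (d : ℝ) * W * a ^ (-T) := by
        have hρ0 : (0:ℝ) ≤ ρ := ENNReal.toReal_nonneg
        rw [ENNReal.ofReal_mul (by norm_num), ENNReal.ofReal_ofNat,
          hρ, ENNReal.ofReal_toReal hρ't,
          ENNReal.mul_rpow_of_nonneg _ _ (Nat.cast_nonneg d),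
          hρ', ← ENNReal.rpow_mul, inv_mul_cancel₀ hdR, ENNReal.rpow_one,
          ENNReal.div_eq_inv_mul, ← ENNReal.rpow_neg, ← mul_assoc, mul_comm _ W,
          mul_assoc, mul_comm W, ← mul_assoc]
        ring

lemma lintegral_small_connW (d : ℕ) (hd : 0 < d) (p : ℕ∞) (T : ℝ) (hT0 : 0 < T)
    (hT1 : T < 1) (w : ℝ) (c : Torus d) (b : ℝ≥0∞) (hb0 : b ≠ 0) (hbt : b ≠ ⊤) :
    ∫⁻ x : Torus d, (if connW d p T w c x < b then connW d p T w c x else 0) ≤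
      2 ^ ((d : ℝ) + T) * (1 - 2 ^ (T - 1))⁻¹ * (ENNReal.ofReal w * b ^ (1 - T)) := by
  set X := connW d p T w c with hX
  have hXm : Measurable X := measurable_connW d p T w c
  set a : ℕ → ℝ≥0∞ := fun j => b * 2 ^ (-((j : ℝ) + 1)) with ha
  have h2j0 : ∀ r : ℝ, (2 : ℝ≥0∞) ^ r ≠ 0 :=
    fun r => (ENNReal.rpow_pos (by norm_num) (by norm_num)).ne'
  have h2jt : ∀ r : ℝ, (2 : ℝ≥0∞) ^ r ≠ ⊤ := fun r => by
    simp [ENNReal.rpow_eq_top_iff]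
  have haj0 : ∀ j, a j ≠ 0 := fun j => mul_ne_zero hb0 (h2j0 _)
  have hajt : ∀ j, a j ≠ ⊤ := fun j => ENNReal.mul_ne_top hbt (h2jt _)
  have hpt : ∀ x, (if X x < b then X x else 0) ≤
      ∑' j : ℕ, Set.indicator {y | a j ≤ X y} (fun _ => b * 2 ^ (-(j : ℝ))) x := by
    intro x
    split
    case isTrue hlt =>
      rcases eq_or_ne (X x) 0 with h0 | h0
      · rw [h0]; exact zero_le
      have hex : ∃ j : ℕ, a j < X x := by
        obtain ⟨m, hm⟩ := ENNReal.exists_inv_two_pow_lt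
          (show X x / b ≠ 0 by
            simp only [ne_eq, ENNReal.div_eq_zero_iff, not_or]
            exact ⟨h0, hbt⟩)
        refine ⟨m, ?_⟩
        have hle : b * 2⁻¹ ^ m ≤ X x := by
          calc b * 2⁻¹ ^ m ≤ b * (X x / b) := mul_le_mul_right hm.le b
            _ ≤ X x := ENNReal.mul_div_le
        have hlt2 : a m < b * 2⁻¹ ^ m := by
          have h2m : (2 : ℝ≥0∞)⁻¹ ^ m = 2 ^ (-(m : ℝ)) := by
            rw [← ENNReal.rpow_natCast (2:ℝ≥0∞)⁻¹ m, ← ENNReal.rpow_neg_one 2,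
              ← ENNReal.rpow_mul]
            norm_num
          rw [ha, h2m]
          exact (ENNReal.mul_lt_mul_iff_right hb0 hbt).mpr
            (ENNReal.rpow_lt_rpow_of_exponent_lt (by norm_num) (by norm_num) (by linarith))
        exact hlt2.trans_le hle
      set j := Nat.find hex with hj
      have hja : a j < X x := Nat.find_spec hex
      have hXle : X x ≤ b * 2 ^ (-(j : ℝ)) := by
        rcases Nat.eq_zero_or_pos j with hj0 | hjpos
        · rw [hj0]
          simpa using hlt.le
        · have hmin := Nat.find_min hex (m := j - 1) (by omega)
          rw [not_lt] at hmin
          have hc : ((j - 1 : ℕ) : ℝ) + 1 = (j : ℝ) := by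
            rw [Nat.cast_sub (by omega : 1 ≤ j)]
            push_cast; ring
          have hstep : a (j - 1) = b * 2 ^ (-(j : ℝ)) := by
            simp only [ha]
            rw [hc]
          rwa [hstep] at hmin
      calc X x ≤ b * 2 ^ (-(j : ℝ)) := hXle
        _ = Set.indicator {y | a j ≤ X y} (fun _ => b * 2 ^ (-(j : ℝ))) x :=
            (Set.indicator_of_mem (show x ∈ {y | a j ≤ X y} from hja.le)
              (fun _ => b * 2 ^ (-(j : ℝ)))).symm
        _ ≤ _ := ENNReal.le_tsum j
    case isFalse => exact zero_le
  have htop : (2:ℝ≥0∞) ≠ ⊤ := ENNReal.ofNat_ne_top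
  have h20 : (2:ℝ≥0∞) ≠ 0 := by norm_num
  calc ∫⁻ x, (if X x < b then X x else 0)
      ≤ ∫⁻ x, ∑' j : ℕ, Set.indicator {y | a j ≤ X y} (fun _ => b * 2 ^ (-(j : ℝ))) x :=
        lintegral_mono hpt
    _ = ∑' j : ℕ, ∫⁻ x, Set.indicator {y | a j ≤ X y} (fun _ => b * 2 ^ (-(j : ℝ))) x :=
        lintegral_tsum fun j =>
          (measurable_const.indicator (hXm measurableSet_Ici)).aemeasurable
    _ = ∑' j : ℕ, (b * 2 ^ (-(j : ℝ))) * volume {y | a j ≤ X y} := by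
        refine tsum_congr fun j => ?_
        have hms : MeasurableSet {y | a j ≤ X y} := hXm measurableSet_Ici
        rw [lintegral_indicator hms, setLIntegral_const]
    _ ≤ ∑' j : ℕ, (b * 2 ^ (-(j : ℝ))) * (2 ^ (d : ℝ) * ENNReal.ofReal w * (a j) ^ (-T)) :=
        ENNReal.tsum_le_tsum fun j => mul_le_mul_right
          (meas_connW_ge_le d hd p T hT0 w c (a j) (haj0 j) (hajt j)) _
    _ = ∑' j : ℕ, (2 ^ ((d : ℝ) + T) * (ENNReal.ofReal w * b ^ (1 - T))) * (2 ^ (T - 1)) ^ j := by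
        refine tsum_congr fun j => ?_
        simp only [ha]
        have e1 : (b * 2 ^ (-((j : ℝ) + 1))) ^ (-T) = b ^ (-T) * 2 ^ (((j : ℝ) + 1) * T) := by
          rw [ENNReal.mul_rpow_of_ne_zero hb0 (h2j0 _), ← ENNReal.rpow_mul]
          congr 1; ring
        have e2 : b * b ^ (-T) = b ^ (1 - T) := by
          rw [sub_eq_add_neg, ENNReal.rpow_add _ _ hb0 hbt, ENNReal.rpow_one]
        have e3 : ((2 : ℝ≥0∞) ^ (T - 1)) ^ j = 2 ^ ((T - 1) * (j : ℝ)) := by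
          rw [← ENNReal.rpow_natCast ((2:ℝ≥0∞) ^ (T-1)) j, ← ENNReal.rpow_mul]
        have e4 : (2 : ℝ≥0∞) ^ (-(j:ℝ)) * 2 ^ (((j : ℝ) + 1) * T) = 2 ^ T * 2 ^ ((T - 1) * (j:ℝ)) := by
          rw [← ENNReal.rpow_add _ _ h20 htop, ← ENNReal.rpow_add _ _ h20 htop]
          congr 1; ring
        have e5 : (2 : ℝ≥0∞) ^ ((d:ℝ) + T) = 2 ^ (d:ℝ) * 2 ^ T := ENNReal.rpow_add _ _ h20 htop
        rw [e1, e3, e5, ← e2]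
        rw [show b * 2 ^ (-(j:ℝ)) * (2 ^ (d:ℝ) * ENNReal.ofReal w *
            (b ^ (-T) * 2 ^ (((j:ℝ) + 1) * T))) =
          (2 ^ (-(j:ℝ)) * 2 ^ (((j:ℝ) + 1) * T)) *
            (2 ^ (d:ℝ) * ENNReal.ofReal w * (b * b ^ (-T))) from by ring, e4]
        ring
    _ = 2 ^ ((d : ℝ) + T) * (1 - 2 ^ (T - 1))⁻¹ * (ENNReal.ofReal w * b ^ (1 - T)) := by
        rw [ENNReal.tsum_mul_left, ENNReal.tsum_geometric]
        ring

open scoped Classical in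
/-- **Expected sum of small connection weights (Lemma 7.1).**
In the weighted geometric random `k`-SAT model on `𝕋^d` with a `𝔭`-norm and
temperature `T < 1`, let `c` be a clause at any position and let the `n` weighted
variables have independent uniformly random positions.  If `x̄ ∈ Ω(W^{1/T})`, then
the expected sum of the connection weights smaller than `x̄` is `O(x̄)`. -/
theorem expected_sum_of_small_connection_weights
    (d : ℕ) (hd : 0 < d) (p : ℕ∞) (T : ℝ) (hT0 : 0 < T) (hT1 : T < 1)
    (w : (n : ℕ) → Fin n → ℝ) (hw : ∀ n v, 1 ≤ w n v)
    (cpos : (n : ℕ) → Torus d)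
    (xb : ℕ → ℝ)
    (hxb : ∃ c > (0 : ℝ), ∀ᶠ n : ℕ in atTop,
      c * (∑ v : Fin n, w n v) ^ (1 / T) ≤ xb n) :
    ∃ C > (0 : ℝ), ∀ᶠ n : ℕ in atTop,
      (∫⁻ vp : Fin n → Torus d,
          ∑ v : Fin n,
            if connW d p T (w n v) (cpos n) (vp v) < ENNReal.ofReal (xb n)
            then connW d p T (w n v) (cpos n) (vp v) else 0) ≤
        ENNReal.ofReal (C * xb n) := by
  obtain ⟨c0, hc0, hev⟩ := hxb
  have hoc0 : ENNReal.ofReal c0 ≠ 0 := by simp [hc0.le, hc0]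
  have hoct : ENNReal.ofReal c0 ≠ ⊤ := ENNReal.ofReal_ne_top
  set A : ℝ≥0∞ := 2 ^ ((d : ℝ) + T) * (1 - 2 ^ (T - 1))⁻¹ with hA
  have h2t : (2 : ℝ≥0∞) ^ ((d:ℝ) + T) ≠ ⊤ := by simp [ENNReal.rpow_eq_top_iff]
  have hr1 : (2 : ℝ≥0∞) ^ (T - 1) < 1 := by
    calc (2 : ℝ≥0∞) ^ (T - 1) < 2 ^ (0 : ℝ) :=
        ENNReal.rpow_lt_rpow_of_exponent_lt (by norm_num) ENNReal.ofNat_ne_top (by linarith)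
      _ = 1 := by rw [ENNReal.rpow_zero]
  have hAt : A ≠ ⊤ := by
    apply ENNReal.mul_ne_top h2t
    rw [ne_eq, ENNReal.inv_eq_top]
    exact fun h => absurd h (tsub_eq_zero_iff_le.not.mpr (not_le.mpr hr1))
  set K : ℝ≥0∞ := A * (ENNReal.ofReal c0) ^ (-T) with hK
  have hKt : K ≠ ⊤ := ENNReal.mul_ne_top hAt (by
    simp [ENNReal.rpow_eq_top_iff, hoc0, ENNReal.ofReal_ne_top])
  refine ⟨K.toReal + 1, by positivity, ?_⟩
  filter_upwards [hev, eventually_ge_atTop 1] with n hn hn1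
  set W : ℝ := ∑ v : Fin n, w n v with hW
  have hW1 : (1 : ℝ) ≤ W := by
    calc (1 : ℝ) ≤ (n : ℝ) := by exact_mod_cast hn1
      _ = ∑ _v : Fin n, (1 : ℝ) := by simp
      _ ≤ W := Finset.sum_le_sum fun v _ => hw n v
  have hWpos : (0 : ℝ) < W := lt_of_lt_of_le one_pos hW1
  have hxbpos : (0 : ℝ) < xb n := by
    calc (0 : ℝ) < c0 * 1 := by linarith
      _ ≤ c0 * W ^ (1 / T) := by
        have : (1:ℝ) ≤ W ^ (1/T) := Real.one_le_rpow hW1 (by positivity)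
        nlinarith
      _ ≤ xb n := hn
  set b : ℝ≥0∞ := ENNReal.ofReal (xb n) with hb
  have hb0 : b ≠ 0 := by simp [hb, hxbpos.le, hxbpos]
  have hbt : b ≠ ⊤ := ENNReal.ofReal_ne_top
  have hmeas : ∀ v : Fin n, Measurable (fun x : Torus d =>
      if connW d p T (w n v) (cpos n) x < b then connW d p T (w n v) (cpos n) x else 0) :=
    fun v => Measurable.ite ((measurable_connW d p T (w n v) (cpos n)) measurableSet_Iio)
      (measurable_connW d p T (w n v) (cpos n)) measurable_const
  have h1 : (∫⁻ vp : Fin n → Torus d, ∑ v : Fin n,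
      if connW d p T (w n v) (cpos n) (vp v) < b
      then connW d p T (w n v) (cpos n) (vp v) else 0)
      = ∑ v : Fin n, ∫⁻ x : Torus d,
        (if connW d p T (w n v) (cpos n) x < b then connW d p T (w n v) (cpos n) x else 0) := by
    rw [lintegral_finset_sum (f := fun (v : Fin n) (vp : Fin n → Torus d) =>
        if connW d p T (w n v) (cpos n) (vp v) < b
        then connW d p T (w n v) (cpos n) (vp v) else 0) _
      (fun v _ => (hmeas v).comp (measurable_pi_apply v))]
    exact Finset.sum_congr rfl fun v _ => lintegral_eval d n v _ (hmeas v)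
  calc (∫⁻ vp : Fin n → Torus d, ∑ v : Fin n,
      if connW d p T (w n v) (cpos n) (vp v) < b
      then connW d p T (w n v) (cpos n) (vp v) else 0)
      = ∑ v : Fin n, ∫⁻ x : Torus d,
        (if connW d p T (w n v) (cpos n) x < b then connW d p T (w n v) (cpos n) x else 0) := h1
    _ ≤ ∑ v : Fin n, A * (ENNReal.ofReal (w n v) * b ^ (1 - T)) :=
        Finset.sum_le_sum fun v _ =>
          lintegral_small_connW d hd p T hT0 hT1 (w n v) (cpos n) b hb0 hbt
    _ = A * b ^ (1 - T) * ENNReal.ofReal W := by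
        have hsum : ∑ v : Fin n, A * (ENNReal.ofReal (w n v) * b ^ (1 - T))
            = (A * b ^ (1 - T)) * ∑ v : Fin n, ENNReal.ofReal (w n v) := by
          rw [Finset.mul_sum]
          exact Finset.sum_congr rfl fun v _ => by ring
        rw [hsum, ← ENNReal.ofReal_sum_of_nonneg
          (fun v _ => le_trans zero_le_one (hw n v))]
    _ ≤ A * b ^ (1 - T) * (b ^ T * (ENNReal.ofReal c0) ^ (-T)) := by
        refine mul_le_mul_right ?_ _
        have hmain : ENNReal.ofReal c0 * (ENNReal.ofReal W) ^ (1 / T) ≤ b := by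
          rw [ENNReal.ofReal_rpow_of_pos hWpos, ← ENNReal.ofReal_mul hc0.le]
          exact ENNReal.ofReal_le_ofReal hn
        have hdiv : (ENNReal.ofReal W) ^ (1 / T) ≤ b / ENNReal.ofReal c0 :=
          (ENNReal.le_div_iff_mul_le (Or.inl hoc0) (Or.inl hoct)).mpr
            (by rwa [mul_comm])
        calc ENNReal.ofReal W = ((ENNReal.ofReal W) ^ (1 / T)) ^ T := by
              rw [← ENNReal.rpow_mul, one_div, inv_mul_cancel₀ hT0.ne', ENNReal.rpow_one]
          _ ≤ (b / ENNReal.ofReal c0) ^ T := ENNReal.rpow_le_rpow hdiv hT0.le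
          _ = b ^ T * (ENNReal.ofReal c0) ^ (-T) := by
              rw [ENNReal.div_rpow_of_nonneg _ _ hT0.le, ENNReal.rpow_neg, div_eq_mul_inv]
    _ = K * b := by
        rw [hK]
        rw [show A * b ^ (1 - T) * (b ^ T * (ENNReal.ofReal c0) ^ (-T)) =
          A * (ENNReal.ofReal c0) ^ (-T) * (b ^ (1 - T) * b ^ T) from by ring]
        rw [← ENNReal.rpow_add _ _ hb0 hbt]
        norm_num
    _ ≤ ENNReal.ofReal (K.toReal + 1) * b := by
        refine mul_le_mul_left ?_ _
        calc K = ENNReal.ofReal K.toReal := (ENNReal.ofReal_toReal hKt).symm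
          _ ≤ ENNReal.ofReal (K.toReal + 1) := ENNReal.ofReal_le_ofReal (by linarith)
    _ = ENNReal.ofReal ((K.toReal + 1) * xb n) := by
        rw [ENNReal.ofReal_mul (by positivity)]
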